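/- For two machines: given nonnegative reals ξ(a) for jobs a in a finite set, there exists a feasible preemptive two-machine schedule in an interval [e, e'] executing exactly ξ(a) units of each job a if and only if e' - e ≥ max{ (1/2)·Σ_a ξ(a), max_a ξ(a) }. -/

import Mathlib

open MeasureTheory ENNReal

private lemma min_max_split (x T : ℝ) (hT0 : 0 ≤ T) :
    min x T + max (x - T) 0 = x := by
  rcases le_total x T with h | h
  · rw [min_eq_left h, max_eq_right (by linarith)]; ring
  · rw [min_eq_right h, max_eq_left (by linarith)]; ring

/-- Two-machine version: given nonnegative amounts `ξ a` for jobs `a` in a finite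
set, a feasible preemptive two-machine schedule in `[e, e']` executing exactly
`ξ a` units of each job exists iff `e' - e ≥ max ((∑ ξ a)/2) (max_a ξ a)`. -/
theorem two_machine_block_feasibility {J : Type*} [Fintype J]
    (ξ : J → ℝ) (hξ : ∀ a, 0 ≤ ξ a) (e e' : ℝ) (hee' : e ≤ e') :
    (∃ S : J → Set ℝ,
        (∀ a, MeasurableSet (S a)) ∧
        (∀ a, S a ⊆ Set.Icc e e') ∧
        (∀ a, volume (S a) = ENNReal.ofReal (ξ a)) ∧
        (∀ t : ℝ, {a | t ∈ S a}.ncard ≤ 2)) ↔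
      ((∑ a, ξ a) / 2 ≤ e' - e ∧ ∀ a, ξ a ≤ e' - e) := by
  classical
  have hT0 : (0:ℝ) ≤ e' - e := sub_nonneg.2 hee'
  constructor
  · rintro ⟨S, hmeas, hsub, hvol, hcard⟩
    constructor
    · -- counting argument
      have key : ∀ t : ℝ, (∑ a, (S a).indicator (1 : ℝ → ℝ≥0∞) t)
          ≤ (Set.Icc e e').indicator (fun _ => (2:ℝ≥0∞)) t := by
        intro t
        by_cases ht : ∃ a, t ∈ S a
        · obtain ⟨a0, ha0⟩ := ht
          have htI : t ∈ Set.Icc e e' := hsub a0 ha0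
          rw [Set.indicator_of_mem htI]
          have : (∑ a, (S a).indicator (1 : ℝ → ℝ≥0∞) t)
              = ((Finset.univ.filter (fun a => t ∈ S a)).card : ℝ≥0∞) := by
            rw [← Finset.sum_boole]
            refine Finset.sum_congr rfl fun a _ => ?_
            by_cases h : t ∈ S a <;> simp [Set.indicator_apply, h]
          rw [this]
          have hn : {a | t ∈ S a}.ncard
              = (Finset.univ.filter (fun a => t ∈ S a)).card := by
            rw [Set.ncard_eq_toFinset_card', Set.toFinset_setOf]
          have h2 := hcard t
          rw [hn] at h2
          exact_mod_cast h2
        · push_neg at ht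
          have : (∑ a, (S a).indicator (1 : ℝ → ℝ≥0∞) t) = 0 := by
            refine Finset.sum_eq_zero fun a _ => ?_
            simp [Set.indicator_of_notMem (ht a)]
          rw [this]
          exact zero_le
      have hint : (∑ a, volume (S a))
          ≤ 2 * ENNReal.ofReal (e' - e) := by
        calc ∑ a, volume (S a)
            = ∑ a, ∫⁻ t, (S a).indicator 1 t := by
              refine Finset.sum_congr rfl fun a _ => ?_
              rw [lintegral_indicator_one (hmeas a)]
          _ = ∫⁻ t, ∑ a, (S a).indicator 1 t := by
              rw [lintegral_finset_sum]
              exact fun a _ => measurable_const.indicator (hmeas a)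
          _ ≤ ∫⁻ t, (Set.Icc e e').indicator (fun _ => (2:ℝ≥0∞)) t :=
              lintegral_mono key
          _ = 2 * volume (Set.Icc e e') := by
              rw [lintegral_indicator_const measurableSet_Icc]
          _ = 2 * ENNReal.ofReal (e' - e) := by rw [Real.volume_Icc]
      rw [show (∑ a, volume (S a)) = ENNReal.ofReal (∑ a, ξ a) by
            rw [ENNReal.ofReal_sum_of_nonneg (fun a _ => hξ a)]
            exact Finset.sum_congr rfl fun a _ => hvol a] at hint
      have h2 : (2:ℝ≥0∞) * ENNReal.ofReal (e' - e)
          = ENNReal.ofReal (2 * (e' - e)) := by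
        rw [ENNReal.ofReal_mul (by norm_num)]
        norm_num
      rw [h2] at hint
      have := (ENNReal.ofReal_le_ofReal_iff (by linarith)).1 hint
      linarith
    · intro a
      have h : volume (S a) ≤ volume (Set.Icc e e') := measure_mono (hsub a)
      rw [hvol a, Real.volume_Icc] at h
      exact le_trans (le_of_eq rfl) ((ENNReal.ofReal_le_ofReal_iff hT0).1 h)
  · rintro ⟨hsum, hmax⟩
    set T := e' - e with hTdef
    have htot : ∑ a, ξ a ≤ 2 * T := by linarith
    -- order the jobs
    obtain ⟨σ⟩ : Nonempty (J ≃ Fin (Fintype.card J)) := ⟨Fintype.equivFin J⟩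
    set s : J → ℝ := fun a => ∑ b ∈ Finset.univ.filter (fun b => σ b < σ a), ξ b
      with hsdef
    have hs0 : ∀ a, 0 ≤ s a := fun a => Finset.sum_nonneg fun b _ => hξ b
    have hnotmem : ∀ a : J, a ∉ Finset.univ.filter (fun b => σ b < σ a) := by
      intro a h
      simp at h
    have hsum_ins : ∀ a : J, s a + ξ a
        = ∑ b ∈ insert a (Finset.univ.filter (fun b => σ b < σ a)), ξ b := by
      intro a
      rw [Finset.sum_insert (hnotmem a)]
      ring
    have hub : ∀ a, s a + ξ a ≤ ∑ b, ξ b := by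
      intro a
      rw [hsum_ins a]
      exact Finset.sum_le_sum_of_subset_of_nonneg (Finset.subset_univ _)
        (fun b _ _ => hξ b)
    have hmono : ∀ a b : J, σ a < σ b → s a + ξ a ≤ s b := by
      intro a b hab
      rw [hsum_ins a]
      refine Finset.sum_le_sum_of_subset_of_nonneg ?_ (fun c _ _ => hξ c)
      intro c hc
      rcases Finset.mem_insert.1 hc with rfl | hc
      · exact Finset.mem_filter.2 ⟨Finset.mem_univ _, hab⟩
      · exact Finset.mem_filter.2 ⟨Finset.mem_univ _,
          lt_trans (Finset.mem_filter.1 hc).2 hab⟩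
    -- the schedule
    set A : J → Set ℝ := fun a =>
      Set.Ico (e + min (s a) T) (e + min (s a + ξ a) T) with hAdef
    set B : J → Set ℝ := fun a =>
      Set.Ico (e + max (s a - T) 0) (e + max (s a + ξ a - T) 0) with hBdef
    refine ⟨fun a => A a ∪ B a, fun a => (measurableSet_Ico).union measurableSet_Ico,
      ?_, ?_, ?_⟩
    · -- subset of Icc
      intro a t ht
      have h2T : s a + ξ a ≤ 2 * T := le_trans (hub a) htot
      rcases ht with ht | ht
      · rcases ht with ⟨h1, h2⟩
        constructor
        · have : (0:ℝ) ≤ min (s a) T := le_min (hs0 a) hT0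
          linarith
        · have : min (s a + ξ a) T ≤ T := min_le_right _ _
          have := h2.le
          simp only [hTdef] at *
          linarith [min_le_right (s a + ξ a) (e' - e)]
      · rcases ht with ⟨h1, h2⟩
        constructor
        · have : (0:ℝ) ≤ max (s a - T) 0 := le_max_right _ _
          linarith
        · have hle : max (s a + ξ a - T) 0 ≤ T := max_le (by linarith) hT0
          simp only [hTdef] at *
          linarith
    · -- measure
      intro a
      have hdisj : Disjoint (A a) (B a) := by
        have hkey : max (s a + ξ a - T) 0 ≤ min (s a) T :=
          max_le (le_min (by linarith [hmax a]) (by linarith [hub a, htot]))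
            (le_min (hs0 a) hT0)
        rw [Set.disjoint_left]
        rintro t ⟨h1, h2⟩ ⟨h3, h4⟩
        linarith
      show volume (A a ∪ B a) = ENNReal.ofReal (ξ a)
      rw [measure_union hdisj measurableSet_Ico]
      rw [hAdef, hBdef]
      simp only [Real.volume_Ico]
      have hmin_le : min (s a) T ≤ min (s a + ξ a) T :=
        min_le_min (by linarith [hξ a]) le_rfl
      have hmax_le : max (s a - T) 0 ≤ max (s a + ξ a - T) 0 :=
        max_le_max (by linarith [hξ a]) le_rfl
      rw [show e + min (s a + ξ a) T - (e + min (s a) T)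
            = min (s a + ξ a) T - min (s a) T by ring,
          show e + max (s a + ξ a - T) 0 - (e + max (s a - T) 0)
            = max (s a + ξ a - T) 0 - max (s a - T) 0 by ring]
      rw [← ENNReal.ofReal_add (by linarith) (by linarith)]
      congr 1
      have h1 := min_max_split (s a) T hT0
      have h2 := min_max_split (s a + ξ a) T hT0
      linarith
    · -- at most two jobs at a time
      intro t
      have hAsub : {a | t ∈ A a}.ncard ≤ 1 := by
        rw [Set.ncard_le_one (Set.toFinite _)]
        intro a ha b hb
        by_contra hne
        have hσ : σ a ≠ σ b := fun h => hne (σ.injective h)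
        rcases lt_or_gt_of_ne hσ with h | h
        · have := hmono a b h
          have h1 : min (s a + ξ a) T ≤ min (s b) T := min_le_min this le_rfl
          rcases ha with ⟨ha1, ha2⟩
          rcases hb with ⟨hb1, hb2⟩
          simp only [hAdef] at *
          linarith
        · have := hmono b a h
          have h1 : min (s b + ξ b) T ≤ min (s a) T := min_le_min this le_rfl
          rcases ha with ⟨ha1, ha2⟩
          rcases hb with ⟨hb1, hb2⟩
          simp only [hAdef] at *
          linarith
      have hBsub : {a | t ∈ B a}.ncard ≤ 1 := by
        rw [Set.ncard_le_one (Set.toFinite _)]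
        intro a ha b hb
        by_contra hne
        have hσ : σ a ≠ σ b := fun h => hne (σ.injective h)
        rcases lt_or_gt_of_ne hσ with h | h
        · have := hmono a b h
          have h1 : max (s a + ξ a - T) 0 ≤ max (s b - T) 0 :=
            max_le_max (by linarith) le_rfl
          rcases ha with ⟨ha1, ha2⟩
          rcases hb with ⟨hb1, hb2⟩
          simp only [hBdef] at *
          linarith
        · have := hmono b a h
          have h1 : max (s b + ξ b - T) 0 ≤ max (s a - T) 0 :=
            max_le_max (by linarith) le_rfl
          rcases ha with ⟨ha1, ha2⟩
          rcases hb with ⟨hb1, hb2⟩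
          simp only [hBdef] at *
          linarith
      have hsub2 : {a | t ∈ A a ∪ B a} ⊆ {a | t ∈ A a} ∪ {a | t ∈ B a} := by
        intro a ha
        rcases ha with h | h
        · exact Or.inl h
        · exact Or.inr h
      calc {a | t ∈ A a ∪ B a}.ncard
          ≤ ({a | t ∈ A a} ∪ {a | t ∈ B a}).ncard :=
            Set.ncard_le_ncard hsub2 (Set.toFinite _)
        _ ≤ {a | t ∈ A a}.ncard + {a | t ∈ B a}.ncard := Set.ncard_union_le _ _
        _ ≤ 2 := by omega
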